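/- For partitions $\lambda, \mu$ each with exactly $N$ parts (parts allowed to be zero), the determinant $D^N_{\lambda,\mu} = \det\left( \binom{\lambda_i + N - i}{\mu_j + N - j} \right)_{1 \le i,j \le N}$ is a nonnegative integer, where the binomial coefficient is taken to be $0$ when $\lambda_i + N - i < \mu_j + N - j$. -/

import Mathlib

open Matrix

/-- Partial Pascal matrices: `Sm M k i j = C(min i k, i - j)` for `j ≤ i`, else `0`. -/
private def Sm (M k : ℕ) : Matrix (Fin M) (Fin M) ℤ :=
  Matrix.of fun i j => if j.val ≤ i.val then (Nat.choose (min i.val k) (i.val - j.val) : ℤ) else 0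

private lemma Sm_zero (M : ℕ) : Sm M 0 = 1 := by
  funext i j
  simp only [Sm, Matrix.of_apply, Matrix.one_apply]
  by_cases h : j.val ≤ i.val
  · rcases eq_or_lt_of_le h with h1 | h1
    · have : i = j := Fin.ext h1.symm
      simp [this, h]
    · have h2 : i ≠ j := by intro e; rw [e] at h1; omega
      have h3 : i.val - j.val ≠ 0 := by omega
      simp only [Nat.min_zero, if_pos h, Matrix.one_apply_ne h2]
      norm_cast
      rw [if_neg h2]
      apply Nat.choose_eq_zero_of_lt
      omega
  · have h2 : i ≠ j := by intro e; rw [e] at h; omega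
    simp [h, h2]

private lemma Sm_succ (M k : ℕ) (i j : Fin M) :
    Sm M (k+1) i j = Sm M k i j +
      (if h : k+1 ≤ i.val then Sm M k ⟨i.val - 1, by omega⟩ j else 0) := by
  by_cases h : k + 1 ≤ i.val
  · rw [dif_pos h]
    simp only [Sm, Matrix.of_apply]
    have hmin1 : min i.val (k+1) = k+1 := by omega
    have hmin2 : min i.val k = k := by omega
    have hmin3 : min (i.val - 1) k = k := by omega
    by_cases hj : j.val ≤ i.val
    · rw [if_pos hj]
      rcases eq_or_lt_of_le hj with h1 | h1
      · have : ¬ (j.val ≤ i.val - 1) := by omega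
        rw [if_neg this, if_pos hj]
        have : i.val - j.val = 0 := by omega
        simp [this, hmin1, hmin2]
      · have hle : j.val ≤ i.val - 1 := by omega
        rw [if_pos hle, if_pos hj]
        rw [hmin1, hmin2, hmin3]
        have hd : i.val - j.val = (i.val - 1 - j.val) + 1 := by omega
        rw [hd, Nat.choose_succ_succ]
        push_cast
        ring
    · have : ¬ (j.val ≤ i.val - 1) := by omega
      rw [if_neg hj, if_neg this, if_neg hj, add_zero]
  · rw [dif_neg h]
    simp only [Sm, Matrix.of_apply]
    have : min i.val (k+1) = min i.val k := by omega
    rw [this, add_zero]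

/-- Minors of the identity matrix with strictly monotone row/column picks are nonnegative. -/
private lemma id_minor (M n : ℕ) (f g : Fin n → Fin M) (hf : StrictMono f) (hg : StrictMono g) :
    0 ≤ ((1 : Matrix (Fin M) (Fin M) ℤ).submatrix f g).det := by
  by_cases hall : ∀ i, ∃ j, f i = g j
  · choose σ hσ using hall
    have hσm : StrictMono σ := by
      intro i i' h
      have h2 : g (σ i) < g (σ i') := by rw [← hσ, ← hσ]; exact hf h
      exact hg.lt_iff_lt.mp h2
    have hσsurj : Function.Surjective σ :=
      Finite.surjective_of_injective hσm.injective
    have hσid : ∀ i, σ i = i := by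
      have := Subsingleton.elim (StrictMono.orderIsoOfSurjective σ hσm hσsurj)
        (OrderIso.refl (Fin n))
      intro i
      have h2 := congrArg (fun e : Fin n ≃o Fin n => e i) this
      simpa using h2
    have hfg : ∀ i, f i = g i := fun i => by rw [hσ i, hσid i]
    have hsub : (1 : Matrix (Fin M) (Fin M) ℤ).submatrix f g = 1 := by
      funext i j
      simp only [Matrix.submatrix_apply, Matrix.one_apply]
      by_cases hij : i = j
      · simp [hij, hfg j]
      · have : f i ≠ g j := by
          rw [hfg i]
          exact fun e => hij (hg.injective e)
        simp [hij, this]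
    rw [hsub, Matrix.det_one]
    norm_num
  · push_neg at hall
    obtain ⟨i, hi⟩ := hall
    rw [Matrix.det_eq_zero_of_row_eq_zero i]
    intro j
    simp [Matrix.one_apply, hi j]

/-- All minors (with strictly monotone picks) of `Sm M k` are nonnegative. -/
private lemma Sm_minor_nonneg (M : ℕ) (k : ℕ) :
    ∀ (n : ℕ) (f g : Fin n → Fin M), StrictMono f → StrictMono g →
      0 ≤ ((Sm M k).submatrix f g).det := by
  induction k with
  | zero =>
    intro n f g hf hg
    rw [Sm_zero]
    exact id_minor M n f g hf hg
  | succ k ih =>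
    intro n f g hf hg
    have key : ∀ s : Finset (Fin n), ∀ e : Fin n → Fin M,
        (∀ i, e i = f i ∨ ((k+1) ≤ (f i).val ∧ (e i).val + 1 = (f i).val)) →
        0 ≤ (Matrix.of fun i j =>
          if i ∈ s then Sm M (k+1) (f i) (g j) else Sm M k (e i) (g j)).det := by
      intro s
      induction s using Finset.induction_on with
      | empty =>
        intro e he
        simp only [Finset.notMem_empty, if_false]
        by_cases hinj : Function.Injective e
        · have hmono : StrictMono e := by
            intro i i' h
            have h1 : (e i).val ≤ (f i).val := by rcases he i with h' | h' <;> omega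
            have h2 : (f i).val < (f i').val := hf h
            have h3 : (f i').val ≤ (e i').val + 1 := by rcases he i' with h' | h' <;> omega
            have h4 : (e i).val ≤ (e i').val := by omega
            have h5 : e i ≠ e i' := fun hc => (ne_of_lt h) (hinj hc)
            exact lt_of_le_of_ne (Fin.le_def.mpr h4) h5
          exact ih n e g hmono hg
        · simp only [Function.Injective, not_forall] at hinj
          obtain ⟨i, i', hii, hne⟩ := hinj
          exact le_of_eq (Matrix.det_zero_of_row_eq hne (by funext j; simp [hii])).symm
      | @insert a s ha ihs =>
        intro e he
        set e₁ : Fin n → Fin M := Function.update e a (f a) with he₁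
        have he₁valid : ∀ i, e₁ i = f i ∨ ((k+1) ≤ (f i).val ∧ (e₁ i).val + 1 = (f i).val) := by
          intro i
          by_cases hia : i = a
          · subst hia; left; simp [he₁]
          · simp only [he₁, Function.update_of_ne hia]; exact he i
        have hmat : (Matrix.of fun i j =>
              if i ∈ insert a s then Sm M (k+1) (f i) (g j) else Sm M k (e i) (g j))
            = (Matrix.of fun i j =>
              if i ∈ s then Sm M (k+1) (f i) (g j) else Sm M k (e₁ i) (g j)).updateRow a
                (fun j => Sm M (k+1) (f a) (g j)) := by
          funext i j
          by_cases hia : i = a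
          · subst hia
            simp [Matrix.updateRow_self]
          · rw [Matrix.updateRow_ne hia]
            simp only [Matrix.of_apply, Finset.mem_insert]
            have : (i = a ∨ i ∈ s) ↔ i ∈ s := by simp [hia]
            rw [if_congr this rfl rfl]
            simp [he₁, Function.update_of_ne hia]
        rw [hmat]
        by_cases h : k + 1 ≤ (f a).val
        · set p : Fin M := ⟨(f a).val - 1, by omega⟩ with hp
          have hrow : (fun j => Sm M (k+1) (f a) (g j))
              = (fun j => Sm M k (f a) (g j)) + (fun j => Sm M k p (g j)) := by
            funext j
            rw [Sm_succ, dif_pos h]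
            rfl
          rw [hrow, Matrix.det_updateRow_add]
          set e₂ : Fin n → Fin M := Function.update e a p with he₂
          have he₂valid : ∀ i, e₂ i = f i ∨ ((k+1) ≤ (f i).val ∧ (e₂ i).val + 1 = (f i).val) := by
            intro i
            by_cases hia : i = a
            · subst hia
              right
              refine ⟨h, ?_⟩
              simp only [he₂, Function.update_self, hp]
              omega
            · simp only [he₂, Function.update_of_ne hia]; exact he i
          have h1 : ((Matrix.of fun i j =>
              if i ∈ s then Sm M (k+1) (f i) (g j) else Sm M k (e₁ i) (g j)).updateRow a
                (fun j => Sm M k (f a) (g j)))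
              = (Matrix.of fun i j =>
                if i ∈ s then Sm M (k+1) (f i) (g j) else Sm M k (e₁ i) (g j)) := by
            have heq : (fun j => Sm M k (f a) (g j))
                = (Matrix.of fun i j =>
                  if i ∈ s then Sm M (k+1) (f i) (g j) else Sm M k (e₁ i) (g j)) a := by
              funext j
              simp [ha, he₁]
            rw [heq, Matrix.updateRow_eq_self]
          have h2 : ((Matrix.of fun i j =>
              if i ∈ s then Sm M (k+1) (f i) (g j) else Sm M k (e₁ i) (g j)).updateRow a
                (fun j => Sm M k p (g j)))
              = (Matrix.of fun i j =>
                if i ∈ s then Sm M (k+1) (f i) (g j) else Sm M k (e₂ i) (g j)) := by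
            funext i j
            by_cases hia : i = a
            · subst hia
              simp [Matrix.updateRow_self, ha, he₂]
            · rw [Matrix.updateRow_ne hia]
              simp only [Matrix.of_apply, he₁, he₂, Function.update_of_ne hia]
          rw [h1, h2]
          exact add_nonneg (ihs e₁ he₁valid) (ihs e₂ he₂valid)
        · have hrow : (fun j => Sm M (k+1) (f a) (g j)) = fun j => Sm M k (f a) (g j) := by
            funext j
            rw [Sm_succ, dif_neg h, add_zero]
          rw [hrow]
          have h1 : ((Matrix.of fun i j =>
              if i ∈ s then Sm M (k+1) (f i) (g j) else Sm M k (e₁ i) (g j)).updateRow a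
                (fun j => Sm M k (f a) (g j)))
              = (Matrix.of fun i j =>
                if i ∈ s then Sm M (k+1) (f i) (g j) else Sm M k (e₁ i) (g j)) := by
            have : (fun j => Sm M k (f a) (g j))
                = (Matrix.of fun i j =>
                  if i ∈ s then Sm M (k+1) (f i) (g j) else Sm M k (e₁ i) (g j)) a := by
              funext j
              simp [ha, he₁]
            rw [this, Matrix.updateRow_eq_self]
          rw [h1]
          exact ihs e₁ he₁valid
    have hfin := key Finset.univ f (fun i => Or.inl rfl)
    simp only [Finset.mem_univ, if_true] at hfin
    convert hfin using 2
    rfl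

theorem D_lambda_mu_nonneg
    (N : ℕ) (l m : Fin N → ℕ)
    (hl : ∀ i j : Fin N, i ≤ j → l j ≤ l i)
    (hm : ∀ i j : Fin N, i ≤ j → m j ≤ m i) :
    0 ≤ (Matrix.det (fun i j : Fin N =>
      (Nat.choose (l i + (N - 1 - i.val)) (m j + (N - 1 - j.val)) : ℤ))) := by
  rcases Nat.eq_zero_or_pos N with hN | hN
  · subst hN
    exact le_of_lt (lt_of_lt_of_eq zero_lt_one Matrix.det_isEmpty.symm)
  · set M := l ⟨0, hN⟩ + m ⟨0, hN⟩ + N with hMdef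
    set a : Fin N → ℕ := fun i => l i + (N - 1 - i.val) with ha
    set b : Fin N → ℕ := fun j => m j + (N - 1 - j.val) with hb
    have haM : ∀ i, a i < M := by
      intro i
      have h1 : l i ≤ l ⟨0, hN⟩ := hl ⟨0, hN⟩ i (by simp [Fin.le_def])
      have h2 : N - 1 - i.val < N := by omega
      simp only [ha]
      omega
    have hbM : ∀ j, b j < M := by
      intro j
      have h1 : m j ≤ m ⟨0, hN⟩ := hm ⟨0, hN⟩ j (by simp [Fin.le_def])
      have h2 : N - 1 - j.val < N := by omega
      simp only [hb]
      omega
    have hanti_a : ∀ i j : Fin N, i < j → a j < a i := by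
      intro i j hij
      have h1 : l j ≤ l i := hl i j (le_of_lt hij)
      have h2 : i.val < j.val := hij
      have h3 : j.val < N := j.isLt
      simp only [ha]
      omega
    have hanti_b : ∀ i j : Fin N, i < j → b j < b i := by
      intro i j hij
      have h1 : m j ≤ m i := hm i j (le_of_lt hij)
      have h2 : i.val < j.val := hij
      have h3 : j.val < N := j.isLt
      simp only [hb]
      omega
    set f : Fin N → Fin M := fun i => ⟨a (Fin.rev i), haM _⟩ with hfdef
    set g : Fin N → Fin M := fun j => ⟨b (Fin.rev j), hbM _⟩ with hgdef
    have hf : StrictMono f := by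
      intro i i' h
      have h1 : Fin.rev i' < Fin.rev i := Fin.rev_lt_rev.mpr h
      exact hanti_a _ _ h1
    have hg : StrictMono g := by
      intro i i' h
      have h1 : Fin.rev i' < Fin.rev i := Fin.rev_lt_rev.mpr h
      exact hanti_b _ _ h1
    set T : Matrix (Fin N) (Fin N) ℤ := Matrix.of fun i j : Fin N =>
      (Nat.choose (l i + (N - 1 - i.val)) (m j + (N - 1 - j.val)) : ℤ) with hT
    show 0 ≤ T.det
    rw [← Matrix.det_submatrix_equiv_self Fin.revPerm T]
    have hTS : T.submatrix Fin.revPerm Fin.revPerm = (Sm M M).submatrix f g := by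
      funext i j
      simp only [Matrix.submatrix_apply, hT, Matrix.of_apply, Sm, hfdef, hgdef,
        Fin.revPerm_apply]
      have hmin : min (a (Fin.rev i)) M = a (Fin.rev i) :=
        Nat.min_eq_left (le_of_lt (haM _))
      by_cases hle : b (Fin.rev j) ≤ a (Fin.rev i)
      · rw [if_pos hle, hmin, Nat.choose_symm hle]
      · rw [if_neg hle]
        have : Nat.choose (a (Fin.rev i)) (b (Fin.rev j)) = 0 :=
          Nat.choose_eq_zero_of_lt (by omega)
        show ((Nat.choose (a (Fin.rev i)) (b (Fin.rev j)) : ℕ) : ℤ) = 0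
        rw [this]
        rfl
    rw [hTS]
    exact Sm_minor_nonneg M M N f g hf hg
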